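/- Multiplication μ : K((t)) × K((t)) → K((t)) is not continuous at (0,0) for the higher topology: there exists an open lattice Λ_0 such that for every open lattice Λ, the set of products μ(Λ, Λ) = {xy : x, y ∈ Λ} is not contained in Λ_0; in fact μ(Λ, Λ) generates all of K((t)), i.e. the O-module spanned by μ(Λ,Λ) is K((t)). -/

import Mathlib

open Filter

variable {K : Type*}

noncomputable def wB (q : ℝ) : WithBot ℤ → ℝ :=
  WithBot.recBotCoe 0 fun k : ℤ => q ^ k

noncomputable def wT (q : ℝ) : WithTop ℤ → ℝ :=
  WithTop.recTopCoe 0 fun k : ℤ => q ^ (-k)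

/-- `a ∈ 𝔭^m` for `m ∈ ℤ ∪ {-∞}`, with `𝔭^{-∞} = K`. -/
def memB [NormedField K] (q : ℝ) (a : K) : WithBot ℤ → Prop :=
  WithBot.recBotCoe True fun k : ℤ => ‖a‖ ≤ q ^ (-k)

/-- `a ∈ 𝔭^m` for `m ∈ ℤ ∪ {∞}`, with `𝔭^{∞} = 0`. -/
def memT [NormedField K] (q : ℝ) (a : K) : WithTop ℤ → Prop :=
  WithTop.recTopCoe (a = 0) fun k : ℤ => ‖a‖ ≤ q ^ (-k)

/-- The set `Λ = Σ_i 𝔭^{n_i} t^i` in `K((t))`. -/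
def latticeSet [NormedField K] (q : ℝ) (n : ℤ → WithBot ℤ) : Set (LaurentSeries K) :=
  {x | ∀ i : ℤ, memB q (x.coeff i) (n i)}

/-- The set `B = Σ_i 𝔭^{k_i} t^i` in `K((t))`. -/
def bddSet [NormedField K] (q : ℝ) (k : ℤ → WithTop ℤ) : Set (LaurentSeries K) :=
  {x | ∀ i : ℤ, memT q (x.coeff i) (k i)}

/-- The admissible seminorm `‖Σ x_i t^i‖ = sup_i |x_i| q^{n_i}` (with `q^{-∞} = 0`). -/
noncomputable def sn [NormedField K] (q : ℝ) (n : ℤ → WithBot ℤ) (x : LaurentSeries K) : ℝ :=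
  ⨆ i : ℤ, ‖x.coeff i‖ * wB q (n i)

/-- Admissibility of the net `(n_i)`: `n_i = -∞` for all sufficiently large `i`. -/
def AdmNet (n : ℤ → WithBot ℤ) : Prop := ∃ i₀ : ℤ, ∀ i ≥ i₀, n i = ⊥

lemma memB_zero [NormedField K] {q : ℝ} (hq : 0 < q) (m : WithBot ℤ) :
    memB (K := K) q 0 m := by
  cases m with
  | bot => trivial
  | coe k => simp only [memB, WithBot.recBotCoe_coe, norm_zero]; positivity

lemma wB_nonneg {q : ℝ} (hq : 0 < q) (m : WithBot ℤ) : 0 ≤ wB q m := by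
  cases m with
  | bot => exact le_refl 0
  | coe k =>
    simp only [wB, WithBot.recBotCoe_coe]
    positivity

lemma single_mem_latticeSet [NormedField K] {q : ℝ} (hq : 0 < q) {n : ℤ → WithBot ℤ}
    {j : ℤ} {a : K} (h : memB q a (n j)) :
    HahnSeries.single j a ∈ latticeSet (K := K) q n := by
  intro i
  by_cases hij : i = j
  · subst hij; rwa [HahnSeries.coeff_single_same]
  · rw [HahnSeries.coeff_single_of_ne hij]; exact memB_zero hq _

/-- multiplication on `K((t))` is not continuous at `(0,0)` for the higher
topology: there is an open lattice `Λ₀` such that for every open lattice `Λ` the set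
`μ(Λ,Λ)` is not contained in `Λ₀`; in fact the `𝒪`-module spanned by `μ(Λ,Λ)` is all of
`K((t))`. -/
theorem multiplication_not_continuous [NontriviallyNormedField K]
    (hna : IsNonarchimedean fun a : K => ‖a‖) (q : ℝ) (hq : 1 < q)
    (hval : ∀ a : K, a ≠ 0 → ∃ m : ℤ, ‖a‖ = q ^ m)
    (hsurj : ∀ m : ℤ, ∃ a : K, ‖a‖ = q ^ m) :
    (∃ n₀ : ℤ → WithBot ℤ, AdmNet n₀ ∧
      ∀ n : ℤ → WithBot ℤ, AdmNet n →
        ¬ ({z : LaurentSeries K | ∃ x ∈ latticeSet (K := K) q n,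
              ∃ y ∈ latticeSet (K := K) q n, z = x * y} ⊆ latticeSet (K := K) q n₀)) ∧
    (∀ n : ℤ → WithBot ℤ, AdmNet n → ∀ x : LaurentSeries K,
      ∃ (m : ℕ) (a : Fin m → K) (y z : Fin m → LaurentSeries K),
        (∀ s : Fin m, ‖a s‖ ≤ 1) ∧
        (∀ s : Fin m, y s ∈ latticeSet (K := K) q n ∧ z s ∈ latticeSet (K := K) q n) ∧
        x = ∑ s : Fin m, a s • (y s * z s)) := by
  have hq0 : (0 : ℝ) < q := zero_lt_one.trans hq
  constructor
  · refine ⟨fun i => if 1 ≤ i then ⊥ else ((0 : ℤ) : WithBot ℤ), ⟨1, fun i hi => by simp [hi]⟩, ?_⟩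
    rintro n ⟨i₀, hi₀⟩ hsub
    set k : ℤ := WithBot.unbotD 0 (n (-i₀)) with hk
    obtain ⟨c, hc⟩ := hsurj (-k)
    obtain ⟨a, ha⟩ := hsurj (k + 1)
    have hx : HahnSeries.single (-i₀) c ∈ latticeSet (K := K) q n := by
      refine single_mem_latticeSet hq0 ?_
      cases hnk : n (-i₀) with
      | bot => trivial
      | coe k' =>
        have hkk : k = k' := by rw [hk, hnk]; rfl
        simp only [memB, WithBot.recBotCoe_coe]
        rw [hc, hkk]
    have hy : HahnSeries.single i₀ a ∈ latticeSet (K := K) q n := by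
      refine single_mem_latticeSet hq0 ?_
      rw [hi₀ i₀ le_rfl]; trivial
    have hz := hsub ⟨_, hx, _, hy, rfl⟩ 0
    rw [HahnSeries.single_mul_single, neg_add_cancel, HahnSeries.coeff_single_same] at hz
    simp only [show ¬ (1 : ℤ) ≤ 0 by norm_num, if_false] at hz
    simp only [memB, WithBot.recBotCoe_coe, neg_zero, zpow_zero, norm_mul] at hz
    rw [hc, ha, ← zpow_add₀ (ne_of_gt hq0)] at hz
    have : -k + (k + 1) = 1 := by ring
    rw [this, zpow_one] at hz
    exact absurd hz (not_le.2 hq)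
  · rintro n ⟨i₀, hi₀⟩ x
    set N : ℤ := x.order with hN
    set S : Finset ℤ := Finset.Ico (N - i₀) i₀ with hS
    set B : ℝ := ∑ i ∈ S, ‖x.coeff (i + i₀)‖ * wB q (n i) with hB
    obtain ⟨m, hm⟩ := pow_unbounded_of_one_lt B hq
    obtain ⟨a, ha⟩ := hsurj (m : ℤ)
    have ha0 : a ≠ 0 := by
      intro h
      rw [h, norm_zero] at ha
      exact absurd ha.symm (ne_of_gt (zpow_pos hq0 _))
    set y : LaurentSeries K := x * HahnSeries.single (-i₀) a⁻¹ with hy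
    refine ⟨1, fun _ => 1, fun _ => y, fun _ => HahnSeries.single i₀ a, fun _ => by simp,
      fun _ => ⟨?_, ?_⟩, ?_⟩
    · intro i
      by_cases hig : i₀ ≤ i
      · rw [hi₀ i hig]; trivial
      · push_neg at hig
        have hyc : y.coeff i = x.coeff (i + i₀) * a⁻¹ := by
          have h1 : i = (i + i₀) + (-i₀) := by ring
          rw [hy]
          conv_lhs => rw [h1]
          rw [HahnSeries.coeff_mul_single_add]
        by_cases hlt : i + i₀ < N
        · rw [hyc, HahnSeries.coeff_eq_zero_of_lt_order hlt, zero_mul]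
          exact memB_zero hq0 _
        · cases hnk : n i with
          | bot => trivial
          | coe k =>
            push_neg at hlt
            have hiS : i ∈ S := Finset.mem_Ico.2 ⟨by linarith, hig⟩
            have hterm : ‖x.coeff (i + i₀)‖ * wB q (n i) ≤ B :=
              Finset.single_le_sum (f := fun j => ‖x.coeff (j + i₀)‖ * wB q (n j))
                (fun j _ => mul_nonneg (norm_nonneg _) (wB_nonneg hq0 _)) hiS
            rw [hnk] at hterm
            have h1 : ‖x.coeff (i + i₀)‖ * q ^ (k : ℤ) ≤ q ^ ((m : ℕ) : ℤ) := by
              rw [zpow_natCast]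
              exact le_trans hterm hm.le
            have h2 : ‖x.coeff (i + i₀)‖ ≤ q ^ (((m : ℕ) : ℤ) - k) := by
              rw [zpow_sub₀ (ne_of_gt hq0), le_div_iff₀ (zpow_pos hq0 _)]
              exact h1
            simp only [memB, WithBot.recBotCoe_coe]
            rw [hyc, norm_mul, norm_inv, ha, ← zpow_neg]
            calc ‖x.coeff (i + i₀)‖ * q ^ (-((m : ℕ) : ℤ))
                ≤ q ^ (((m : ℕ) : ℤ) - k) * q ^ (-((m : ℕ) : ℤ)) :=
                  mul_le_mul_of_nonneg_right h2 (le_of_lt (zpow_pos hq0 _))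
              _ = q ^ (-k) := by
                  rw [← zpow_add₀ (ne_of_gt hq0)]
                  congr 1
                  ring
    · refine single_mem_latticeSet hq0 ?_
      rw [hi₀ i₀ le_rfl]; trivial
    · rw [Fin.sum_univ_one, one_smul, hy, mul_assoc, HahnSeries.single_mul_single,
        neg_add_cancel, inv_mul_cancel₀ ha0, HahnSeries.single_zero_one, mul_one]
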